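/- With the Radau reconstruction I defined by (I v)|_{I_n} = v|_{I_n} + ((−1)^{q_n}/2)(L_{q_n}^n − L_{q_n+1}^n)⟦v⟧_{n−1}, for every scalar polynomial φ of degree at most q_n on I_n: ∫_{I_n} ∂_t(I v) φ dt = ∫_{I_n} ∂_t v φ dt − ⟦v⟧_{n−1} φ(t_{n−1}^+), as an identity in the Hilbert space V. -/

import Mathlib

open MeasureTheory Polynomial

/-- The Legendre polynomial of degree `q` (Rodrigues' formula). -/
noncomputable def legendreP (q : ℕ) : Polynomial ℝ :=
  ((1 : ℝ) / (2 ^ q * q.factorial)) • (fun p : Polynomial ℝ => derivative p)^[q] ((X ^ 2 - 1) ^ q)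

/-- The Legendre polynomial of degree `q` mapped affinely from `(-1,1)` to `(a,b)`,
evaluated at `t`. -/
noncomputable def legMap (q : ℕ) (a b t : ℝ) : ℝ :=
  (legendreP q).eval (2 * (t - a) / (b - a) - 1)

private lemma fact_step (r : ℝ) (n : ℕ) (p : ℝ[X]) :
    derivative ((X - C r) ^ (n + 1) * p) =
      (X - C r) ^ n * (C ((n : ℝ) + 1) * p + (X - C r) * derivative p) := by
  rw [derivative_mul, derivative_pow]
  simp only [derivative_sub, derivative_X, derivative_C, sub_zero, Nat.add_sub_cancel,
    Nat.cast_add, Nat.cast_one, map_add, map_one, map_natCast]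
  ring

private lemma vanish_lem (r : ℝ) : ∀ (k n : ℕ), k < n → ∀ p : ℝ[X],
    (derivative^[k] ((X - C r) ^ n * p)).eval r = 0 := by
  intro k
  induction k with
  | zero =>
    intro n hn p
    simp [eval_pow, zero_pow (show n ≠ 0 by omega)]
  | succ k ih =>
    intro n hn p
    obtain ⟨m, rfl⟩ : ∃ m, n = m + 1 := ⟨n - 1, (Nat.succ_pred_eq_of_pos (by omega)).symm⟩
    rw [Function.iterate_succ_apply, fact_step]
    exact ih m (Nat.lt_of_succ_lt_succ hn) _

private lemma evalD_lem (r : ℝ) : ∀ (n : ℕ) (p : ℝ[X]),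
    (derivative^[n] ((X - C r) ^ n * p)).eval r = n.factorial * p.eval r := by
  intro n
  induction n with
  | zero => intro p; simp
  | succ n ih =>
    intro p
    rw [Function.iterate_succ_apply, fact_step, ih]
    simp [Nat.factorial_succ]
    ring

private lemma poly_ii (p : ℝ[X]) (xa xb : ℝ) :
    IntervalIntegrable (fun t => p.eval t) volume xa xb :=
  (p.continuous).intervalIntegrable xa xb

private lemma poly_ftc (p : ℝ[X]) (xa xb : ℝ) :
    ∫ t in xa..xb, (derivative p).eval t = p.eval xb - p.eval xa :=
  intervalIntegral.integral_eq_sub_of_hasDerivAt (fun t _ => p.hasDerivAt t)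
    (poly_ii _ _ _)

private lemma ortho_lem (xa xb : ℝ) : ∀ (m : ℕ) (ψ H : ℝ[X]),
    (∀ k, k < m → (derivative^[k] H).eval xa = 0) →
    (∀ k, k < m → (derivative^[k] H).eval xb = 0) →
    derivative^[m] ψ = 0 →
    ∫ t in xa..xb, (ψ * derivative^[m] H).eval t = 0 := by
  intro m
  induction m with
  | zero =>
    intro ψ H _ _ hψ
    simp only [Function.iterate_zero, id_eq] at hψ ⊢
    simp [hψ]
  | succ m ih =>
    intro ψ H ha hb hψ
    have hid : ψ * derivative^[m + 1] H =
        derivative (ψ * derivative^[m] H) - derivative ψ * derivative^[m] H := by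
      rw [derivative_mul, Function.iterate_succ_apply' derivative]
      ring
    have h2 : (∫ t in xa..xb, (derivative ψ * derivative^[m] H).eval t) = 0 :=
      ih (derivative ψ) H (fun k hk => ha k (hk.trans (Nat.lt_succ_self m)))
        (fun k hk => hb k (hk.trans (Nat.lt_succ_self m)))
        (by rw [← Function.iterate_succ_apply]; exact hψ)
    calc (∫ t in xa..xb, (ψ * derivative^[m + 1] H).eval t)
        = ∫ t in xa..xb, ((derivative (ψ * derivative^[m] H)).eval t
            - (derivative ψ * derivative^[m] H).eval t) := by
          rw [hid]; simp only [eval_sub]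
      _ = (∫ t in xa..xb, (derivative (ψ * derivative^[m] H)).eval t)
            - ∫ t in xa..xb, (derivative ψ * derivative^[m] H).eval t :=
          intervalIntegral.integral_sub (poly_ii _ _ _) (poly_ii _ _ _)
      _ = 0 := by
          rw [poly_ftc, h2]
          simp [ha m (Nat.lt_succ_self m), hb m (Nat.lt_succ_self m)]

private lemma legendreP_eq (q : ℕ) :
    legendreP q = C ((1 : ℝ) / (2 ^ q * q.factorial)) * derivative^[q] ((X ^ 2 - 1) ^ q) := by
  rw [legendreP, smul_eq_C_mul]

private lemma hsplit (q : ℕ) :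
    ((X : ℝ[X]) ^ 2 - 1) ^ q = (X - C 1) ^ q * (X - C (-1)) ^ q := by
  rw [← mul_pow]
  congr 1
  simp only [map_one, map_neg]
  ring

private lemma leg_vanish_one (q k : ℕ) (hk : k < q) :
    (derivative^[k] (((X : ℝ[X]) ^ 2 - 1) ^ q)).eval 1 = 0 := by
  rw [hsplit]; exact vanish_lem 1 k q hk _

private lemma leg_vanish_negone (q k : ℕ) (hk : k < q) :
    (derivative^[k] (((X : ℝ[X]) ^ 2 - 1) ^ q)).eval (-1) = 0 := by
  rw [hsplit, mul_comm]; exact vanish_lem (-1) k q hk _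

private lemma legendreP_eval_one (q : ℕ) : (legendreP q).eval 1 = 1 := by
  rw [legendreP_eq, eval_mul, eval_C, hsplit, evalD_lem]
  have h2 : ((2 : ℝ) ^ q) ≠ 0 := by positivity
  have hf : ((q.factorial : ℝ)) ≠ 0 := Nat.cast_ne_zero.mpr q.factorial_ne_zero
  rw [eval_pow, eval_sub, eval_X, eval_C]
  field_simp
  norm_num

private lemma legendreP_eval_negone (q : ℕ) : (legendreP q).eval (-1) = (-1) ^ q := by
  rw [legendreP_eq, eval_mul, eval_C, hsplit, mul_comm ((X - C 1) ^ q), evalD_lem]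
  have h2 : ((2 : ℝ) ^ q) ≠ 0 := by positivity
  have hf : ((q.factorial : ℝ)) ≠ 0 := Nat.cast_ne_zero.mpr q.factorial_ne_zero
  rw [eval_pow, eval_sub, eval_X, eval_C]
  rw [show (-1 - 1 : ℝ) = (-1) * 2 by norm_num, mul_pow]
  field_simp

private lemma ortho_leg (m : ℕ) (ψ : Polynomial ℝ) (hψ : derivative^[m] ψ = 0) :
    (∫ x in (-1:ℝ)..1, (ψ * legendreP m).eval x) = 0 := by
  rw [legendreP_eq]
  have hre : ψ * (C ((1:ℝ)/(2^m * m.factorial)) * derivative^[m] ((X^2-1)^m))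
      = C ((1:ℝ)/(2^m * m.factorial)) * (ψ * derivative^[m] ((X^2-1)^m)) := by ring
  rw [hre]
  simp only [eval_mul, eval_C]
  rw [intervalIntegral.integral_const_mul]
  have h0 := ortho_lem (-1) 1 m ψ ((X ^ 2 - 1) ^ m) (fun k hk => leg_vanish_negone m k hk)
    (fun k hk => leg_vanish_one m k hk) hψ
  simp only [eval_mul] at h0
  rw [h0, mul_zero]

private lemma core_lem (q : ℕ) (ψ : Polynomial ℝ) (hψ : ψ.natDegree ≤ q) :
    ∫ x in (-1:ℝ)..1, (ψ * derivative (legendreP q - legendreP (q + 1))).eval x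
      = -(2 * (-1) ^ q * ψ.eval (-1)) := by
  set P : Polynomial ℝ := legendreP q - legendreP (q + 1) with hP
  have hdq : derivative^[q] (derivative ψ) = 0 := by
    rw [← Function.iterate_succ_apply]
    exact iterate_derivative_eq_zero (Nat.lt_succ_of_le hψ)
  have hdq1 : derivative^[q + 1] (derivative ψ) = 0 := by
    rw [← Function.iterate_succ_apply]
    exact iterate_derivative_eq_zero (show ψ.natDegree < q + 2 by omega)
  have hid : ψ * derivative P
      = derivative (ψ * P) - derivative ψ * legendreP q + derivative ψ * legendreP (q + 1) := by
    rw [derivative_mul, hP]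
    ring
  calc (∫ x in (-1:ℝ)..1, (ψ * derivative P).eval x)
      = ∫ x in (-1:ℝ)..1, (((derivative (ψ * P)).eval x
          - (derivative ψ * legendreP q).eval x)
          + (derivative ψ * legendreP (q + 1)).eval x) := by
        simp only [hid, eval_add, eval_sub]
    _ = ((∫ x in (-1:ℝ)..1, (derivative (ψ * P)).eval x)
          - ∫ x in (-1:ℝ)..1, (derivative ψ * legendreP q).eval x)
          + ∫ x in (-1:ℝ)..1, (derivative ψ * legendreP (q + 1)).eval x := by
        rw [intervalIntegral.integral_add ((poly_ii _ _ _).sub (poly_ii _ _ _)) (poly_ii _ _ _),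
          intervalIntegral.integral_sub (poly_ii _ _ _) (poly_ii _ _ _)]
    _ = -(2 * (-1) ^ q * ψ.eval (-1)) := by
        rw [poly_ftc, ortho_leg q (derivative ψ) hdq, ortho_leg (q + 1) (derivative ψ) hdq1]
        simp only [hP, eval_mul, eval_sub, legendreP_eval_one, legendreP_eval_negone, pow_succ]
        ring

/-- Identity (3.7) for the Radau reconstruction: on `I_n = (a,b)`, for `v` a
`V`-valued polynomial of degree ≤ q with derivative `v'`, jump
`j = ⟦v⟧_{n-1} = v(t_{n-1}) − v(t_{n-1}⁺)`, and any scalar polynomial `φ` of degree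
at most `q`, `∫_{I_n} ∂_t(I v) φ dt = ∫_{I_n} ∂_t v φ dt − ⟦v⟧_{n-1} φ(t_{n-1}⁺)`,
as an identity in `V`, where
`(I v)(t) = v(t) + ((−1)^q/2)(L_q(t) − L_{q+1}(t)) • j`. -/
theorem stmt_7 {V : Type*} [NormedAddCommGroup V] [NormedSpace ℝ V] [CompleteSpace V]
    (q : ℕ) (a b : ℝ) (hab : a < b)
    (v v' : ℝ → V)
    (hpoly : ∃ c : Fin (q + 1) → V, ∀ t : ℝ, v t = ∑ i : Fin (q + 1), t ^ (i : ℕ) • c i)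
    (hderiv : ∀ t : ℝ, HasDerivAt v (v' t) t)
    (j : V) (φ : Polynomial ℝ) (hφ : φ.natDegree ≤ q) :
    (∫ t in a..b, φ.eval t •
        (v' t + (((-1 : ℝ) ^ q / 2) *
          deriv (fun s => legMap q a b s - legMap (q + 1) a b s) t) • j))
      = (∫ t in a..b, φ.eval t • v' t) - φ.eval a • j := by
  obtain ⟨cv, hcv⟩ := hpoly
  have hba : b - a ≠ 0 := sub_ne_zero.mpr hab.ne'
  set c : ℝ := 2 / (b - a) with hcdef
  have hc : c ≠ 0 := div_ne_zero two_ne_zero hba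
  have hinner : ∀ t : ℝ, HasDerivAt (fun s : ℝ => 2 * (s - a) / (b - a) - 1) c t := by
    intro t
    have h := ((((hasDerivAt_id t).sub_const a).const_mul 2).div_const (b - a)).sub_const 1
    simpa [hcdef, mul_one] using h
  have hleg : ∀ (m : ℕ) (t : ℝ), HasDerivAt (fun s => legMap m a b s)
      ((derivative (legendreP m)).eval (2 * (t - a) / (b - a) - 1) * c) t := by
    intro m t
    exact (Polynomial.hasDerivAt (legendreP m) _).comp t (hinner t)
  have hdlr : ∀ t : ℝ, deriv (fun s => legMap q a b s - legMap (q + 1) a b s) t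
      = c * (derivative (legendreP q - legendreP (q + 1))).eval (2 * (t - a) / (b - a) - 1) := by
    intro t
    rw [((hleg q t).fun_sub (hleg (q + 1) t)).deriv]
    rw [derivative_sub, eval_sub]
    ring
  have hv' : v' = fun t => ∑ i : Fin (q + 1), (((i : ℕ) : ℝ) * t ^ ((i : ℕ) - 1)) • cv i := by
    funext t
    refine (hderiv t).unique ?_
    have hsum : HasDerivAt (fun s : ℝ => ∑ i : Fin (q + 1), s ^ (i : ℕ) • cv i)
        (∑ i : Fin (q + 1), (((i : ℕ) : ℝ) * t ^ ((i : ℕ) - 1)) • cv i) t :=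
      HasDerivAt.fun_sum fun i _ => (hasDerivAt_pow (i : ℕ) t).smul_const (cv i)
    have hveq : v = fun s : ℝ => ∑ i : Fin (q + 1), s ^ (i : ℕ) • cv i := funext hcv
    rw [hveq]
    exact hsum
  have hv'cont : Continuous v' := by
    rw [hv']
    exact continuous_finset_sum _ fun i _ =>
      (continuous_const.mul (continuous_pow _)).smul continuous_const
  set w : ℝ → ℝ := fun t => ((-1 : ℝ) ^ q / 2) *
      deriv (fun s => legMap q a b s - legMap (q + 1) a b s) t with hw
  have hgoalL : (∫ t in a..b, φ.eval t •
        (v' t + (((-1 : ℝ) ^ q / 2) *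
          deriv (fun s => legMap q a b s - legMap (q + 1) a b s) t) • j))
      = ∫ t in a..b, φ.eval t • (v' t + w t • j) := rfl
  rw [hgoalL]
  have hwfun : w = fun t => ((-1 : ℝ) ^ q / 2) *
      (c * (derivative (legendreP q - legendreP (q + 1))).eval (2 * (t - a) / (b - a) - 1)) := by
    funext t
    show ((-1 : ℝ) ^ q / 2) * deriv (fun s => legMap q a b s - legMap (q + 1) a b s) t = _
    rw [hdlr t]
  have hwcont : Continuous w := by
    rw [hwfun]
    have hin : Continuous fun t : ℝ => 2 * (t - a) / (b - a) - 1 := by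
      apply Continuous.sub _ continuous_const
      exact (continuous_const.mul (continuous_id.sub continuous_const)).div_const _
    exact continuous_const.mul (continuous_const.mul
      ((Polynomial.continuous _).comp hin))
  have hi1 : IntervalIntegrable (fun t => φ.eval t • v' t) volume a b :=
    ((Polynomial.continuous φ).smul hv'cont).intervalIntegrable a b
  have hi2 : IntervalIntegrable (fun t => (φ.eval t * w t) • j) volume a b :=
    (((Polynomial.continuous φ).mul hwcont).smul continuous_const).intervalIntegrable a b
  have hsplit2 : (∫ t in a..b, φ.eval t • (v' t + w t • j))
      = (∫ t in a..b, φ.eval t • v' t) + (∫ t in a..b, φ.eval t * w t) • j := by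
    have h1 : ∀ t, φ.eval t • (v' t + w t • j)
        = φ.eval t • v' t + (φ.eval t * w t) • j := by
      intro t; rw [smul_add, smul_smul]
    simp only [h1]
    rw [intervalIntegral.integral_add hi1 hi2, intervalIntegral.integral_smul_const]
  rw [hsplit2]
  have hkey : (∫ t in a..b, φ.eval t * w t) = -φ.eval a := by
    set e : ℝ := -(c * a) - 1 with he
    set ψ : Polynomial ℝ := φ.comp (C c⁻¹ * X + C (a + c⁻¹)) with hψdef
    have hψdeg : ψ.natDegree ≤ q := by
      rw [hψdef, natDegree_comp, natDegree_linear (inv_ne_zero hc)]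
      simpa using hφ
    have hptf : ∀ t : ℝ, φ.eval t * w t
        = (((-1 : ℝ) ^ q / 2) * c) *
          ((fun x => (ψ * derivative (legendreP q - legendreP (q + 1))).eval x) (c * t + e)) := by
      intro t
      have hσ : 2 * (t - a) / (b - a) - 1 = c * t + e := by
        rw [he, hcdef]; field_simp; ring
      have hψt : ψ.eval (c * t + e) = φ.eval t := by
        rw [hψdef, eval_comp]
        congr 1
        simp only [eval_add, eval_mul, eval_C, eval_X]
        rw [he]
        field_simp
        ring
      rw [hwfun]
      simp only [hσ, eval_mul, hψt]
      ring
    calc (∫ t in a..b, φ.eval t * w t)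
        = ∫ t in a..b, (((-1 : ℝ) ^ q / 2) * c) *
            ((fun x => (ψ * derivative (legendreP q - legendreP (q + 1))).eval x) (c * t + e)) :=
          intervalIntegral.integral_congr fun t _ => hptf t
      _ = (((-1 : ℝ) ^ q / 2) * c) * ∫ t in a..b,
            (fun x => (ψ * derivative (legendreP q - legendreP (q + 1))).eval x) (c * t + e) :=
          intervalIntegral.integral_const_mul _ _
      _ = (((-1 : ℝ) ^ q / 2) * c) * (c⁻¹ • ∫ x in (c * a + e)..(c * b + e),
            (ψ * derivative (legendreP q - legendreP (q + 1))).eval x) := by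
          rw [intervalIntegral.integral_comp_mul_add
            (fun x => (ψ * derivative (legendreP q - legendreP (q + 1))).eval x) hc e]
      _ = -φ.eval a := by
          have hea : c * a + e = -1 := by rw [he]; ring
          have heb : c * b + e = 1 := by
            rw [he, hcdef]; field_simp; ring
          rw [hea, heb, core_lem q ψ hψdeg]
          have hψa : ψ.eval (-1) = φ.eval a := by
            rw [hψdef, eval_comp]
            congr 1
            simp only [eval_add, eval_mul, eval_C, eval_X]
            ring
          rw [hψa, smul_eq_mul]
          have hmm : ((-1 : ℝ) ^ q) * ((-1) ^ q) = 1 := by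
            rw [← pow_add]; exact Even.neg_one_pow ⟨q, rfl⟩
          calc (((-1 : ℝ) ^ q / 2) * c) * (c⁻¹ * -(2 * (-1) ^ q * φ.eval a))
              = -(((-1 : ℝ) ^ q * (-1) ^ q) * (c * c⁻¹) * φ.eval a) := by ring
            _ = -φ.eval a := by rw [hmm, mul_inv_cancel₀ hc]; ring
  rw [hkey]
  rw [neg_smul, ← sub_eq_add_neg]
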